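/- Fix an integer k ≥ 1 and φ ∈ (0,π). Then for every λ₀ ∈ (0,1), the function λ ↦ P_k^φ(λ) has derivative at λ₀ equal to (1 + cos δ)^{−2} · [ (1 + cos φ)(1 + cos((2k+1)δ)) − (2k+1)(cos φ − cos δ)(1 + cos δ)·sin((2k+1)δ)/sin δ ], where δ = arccos(1 − λ₀(1 − cos φ)). -/

import Mathlib

set_option maxHeartbeats 1000000


/-- The success probability `P_k^φ(λ)` of the matched-phase Grover algorithm after
`k` iterations: `P_k^φ(λ) = A·cos((2k+1)δ) + B` where `θ = arcsin √λ`,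
`δ = arccos (1 − λ(1 − cos φ))`, `A = (sin²θ/sin²δ)(cos φ − cos δ)` and
`B = (sin²θ/sin²δ)(1 − cos φ·cos δ)`. -/
noncomputable def grovP (k : ℕ) (φ lam : ℝ) : ℝ :=
  let θ : ℝ := Real.arcsin (Real.sqrt lam)
  let δ : ℝ := Real.arccos (1 - lam * (1 - Real.cos φ))
  let A : ℝ := Real.sin θ ^ 2 / Real.sin δ ^ 2 * (Real.cos φ - Real.cos δ)
  let B : ℝ := Real.sin θ ^ 2 / Real.sin δ ^ 2 * (1 - Real.cos φ * Real.cos δ)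
  A * Real.cos ((2 * (k : ℝ) + 1) * δ) + B

/-- `φ_k^min = arccos(1 − (2 − 2cos(π/(2k+1)))/(1 − cos(π/(2k−1))))`. -/
noncomputable def phiMin (k : ℕ) : ℝ :=
  Real.arccos (1 - (2 - 2 * Real.cos (Real.pi / (2 * (k : ℝ) + 1))) /
    (1 - Real.cos (Real.pi / (2 * (k : ℝ) - 1))))

/-- For k ≥ 1 and φ ∈ (0,π), at every λ₀ ∈ (0,1) the function
λ ↦ P_k^φ(λ) has derivative
(1 + cos δ)⁻² · [(1 + cos φ)(1 + cos((2k+1)δ))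
  − (2k+1)(cos φ − cos δ)(1 + cos δ)·sin((2k+1)δ)/sin δ],
where δ = arccos(1 − λ₀(1 − cos φ)). -/
theorem derivative_of_success_probability
    (k : ℕ) (hk : 1 ≤ k) (φ : ℝ) (hφ : φ ∈ Set.Ioo 0 Real.pi)
    (lam₀ : ℝ) (hlam₀ : lam₀ ∈ Set.Ioo (0 : ℝ) 1)
    (δ : ℝ) (hδ : δ = Real.arccos (1 - lam₀ * (1 - Real.cos φ))) :
    HasDerivAt (fun lam => grovP k φ lam)
      ((1 + Real.cos δ) ^ (-2 : ℤ) *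
        ((1 + Real.cos φ) * (1 + Real.cos ((2 * (k : ℝ) + 1) * δ)) -
          (2 * (k : ℝ) + 1) * (Real.cos φ - Real.cos δ) * (1 + Real.cos δ) *
            (Real.sin ((2 * (k : ℝ) + 1) * δ) / Real.sin δ)))
      lam₀ := by
  obtain ⟨hφ0, hφπ⟩ := hφ
  obtain ⟨hl0, hl1⟩ := hlam₀
  have hcφ1 : Real.cos φ < 1 := by
    have := Real.cos_lt_cos_of_nonneg_of_le_pi (le_refl 0) hφπ.le hφ0
    simpa using this
  have hcφ2 : -1 < Real.cos φ := by
    have := Real.cos_lt_cos_of_nonneg_of_le_pi hφ0.le (le_refl Real.pi) hφπ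
    simpa using this
  set c : ℝ := 1 - Real.cos φ with hc
  have hc0 : 0 < c := by simp [hc]; linarith
  have hc2 : c < 2 := by simp [hc]; linarith
  set u : ℝ := 1 - lam₀ * c with hu
  have hu1 : u < 1 := by nlinarith
  have hum1 : -1 < u := by nlinarith
  set m : ℝ := 2 * (k : ℝ) + 1 with hm
  -- facts about δ
  have hδcos : Real.cos δ = u := by
    rw [hδ]; exact Real.cos_arccos (by linarith) (by linarith)
  have hδsin : Real.sin δ = Real.sqrt (1 - u ^ 2) := by
    rw [hδ, Real.sin_arccos]
  have hs0 : 0 < 1 - u ^ 2 := by nlinarith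
  have hsq0 : 0 < Real.sqrt (1 - u ^ 2) := Real.sqrt_pos.mpr hs0
  have hsq2 : Real.sqrt (1 - u ^ 2) ^ 2 = 1 - u ^ 2 := Real.sq_sqrt hs0.le
  -- the simplified function
  set g : ℝ → ℝ := fun lam =>
    ((lam - 1) * Real.cos (m * Real.arccos (1 - lam * c)) + 1 + lam * Real.cos φ)
      / (2 - lam * c) with hg
  have heq : ∀ lam ∈ Set.Ioo (0:ℝ) 1, grovP k φ lam = g lam := by
    intro lam hlam
    obtain ⟨h0, h1⟩ := hlam
    have hA1 : 1 - lam * c < 1 := by nlinarith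
    have hAm1 : -1 < 1 - lam * c := by nlinarith
    have hsinδ2 : Real.sin (Real.arccos (1 - lam * c)) ^ 2 = 1 - (1 - lam * c) ^ 2 := by
      rw [Real.sin_arccos]; exact Real.sq_sqrt (by nlinarith)
    have hcosδ : Real.cos (Real.arccos (1 - lam * c)) = 1 - lam * c :=
      Real.cos_arccos (by linarith) (by linarith)
    have hsinθ2 : Real.sin (Real.arcsin (Real.sqrt lam)) ^ 2 = lam := by
      rw [Real.sin_arcsin (by linarith [Real.sqrt_nonneg lam]) (Real.sqrt_le_one.mpr h1.le)]
      exact Real.sq_sqrt h0.le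
    have hne1 : (1 : ℝ) - (1 - lam * c) ^ 2 ≠ 0 := by nlinarith
    have hne2 : (2 : ℝ) - lam * c ≠ 0 := by nlinarith
    simp only [grovP, hg, hc]
    rw [hsinθ2, hsinδ2, hcosδ]
    rw [← hc, ← hm]
    field_simp
    ring
  -- derivative of g
  have hxne1 : u ≠ -1 := by linarith
  have hxne2 : u ≠ 1 := by linarith
  have hA : HasDerivAt (fun lam : ℝ => 1 - lam * c) (-c) lam₀ := by
    simpa using ((hasDerivAt_id lam₀).mul_const c).const_sub 1
  have harccos : HasDerivAt (fun lam : ℝ => Real.arccos (1 - lam * c))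
      (-(1 / Real.sqrt (1 - u ^ 2)) * (-c)) lam₀ :=
    (Real.hasDerivAt_arccos hxne1 hxne2).comp (h := fun lam : ℝ => 1 - lam * c) lam₀ hA
  have hG : HasDerivAt (fun lam : ℝ => m * Real.arccos (1 - lam * c))
      (m * (-(1 / Real.sqrt (1 - u ^ 2)) * (-c))) lam₀ := harccos.const_mul m
  have hcosG : HasDerivAt (fun lam : ℝ => Real.cos (m * Real.arccos (1 - lam * c)))
      (-Real.sin (m * Real.arccos u) * (m * (-(1 / Real.sqrt (1 - u ^ 2)) * (-c)))) lam₀ := by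
    simpa [hu] using hG.cos
  have hlm1 : HasDerivAt (fun lam : ℝ => lam - 1) 1 lam₀ := by
    simpa using (hasDerivAt_id lam₀).sub_const 1
  have hn : HasDerivAt
      (fun lam : ℝ => (lam - 1) * Real.cos (m * Real.arccos (1 - lam * c)) + 1 + lam * Real.cos φ)
      ((1 * Real.cos (m * Real.arccos u) +
        (lam₀ - 1) * (-Real.sin (m * Real.arccos u) * (m * (-(1 / Real.sqrt (1 - u ^ 2)) * (-c)))))
        + Real.cos φ) lam₀ := by
    have := ((hlm1.mul hcosG).add_const 1).add ((hasDerivAt_id lam₀).mul_const (Real.cos φ))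
    exact this.congr_deriv (by rw [hu]; ring)
  have hd : HasDerivAt (fun lam : ℝ => 2 - lam * c) (-c) lam₀ := by
    simpa using ((hasDerivAt_id lam₀).mul_const c).const_sub 2
  have hdne : (2 : ℝ) - lam₀ * c ≠ 0 := by nlinarith
  have hgderiv := hn.div hd hdne
  have hgg : HasDerivAt g _ lam₀ := hgderiv
  -- transfer to grovP via eventual equality
  have hmem : Set.Ioo (0:ℝ) 1 ∈ nhds lam₀ := Ioo_mem_nhds hl0 hl1
  have hev : (fun lam => grovP k φ lam) =ᶠ[nhds lam₀] g :=
    Filter.eventuallyEq_of_mem hmem heq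
  have hfinal := hgg.congr_of_eventuallyEq hev
  refine hfinal.congr_deriv (Eq.symm ?_)
  -- now prove the derivative values are equal
  have hδa : δ = Real.arccos u := by rw [hδ, hu, hc]
  rw [← hδa, hδcos, hδsin]
  rw [zpow_neg, zpow_two]
  have h1u : (0:ℝ) < 1 + u := by linarith
  field_simp
  rw [hu, hc]
  ring_nf
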